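/- For every ε₀ > 0 there exists δ₀ > 0 such that the following holds for every CAT(1) space (Y,d): if P, Q, R, S ∈ Y satisfy max{d(P,Q), d(Q,R), d(R,S), d(P,S)} ≤ δ₀, then d(P,R)² + d(Q,S)² ≤ d(P,Q)² + d(Q,R)² + d(R,S)² + d(P,S)² + ε₀·δ₀². -/

import Mathlib

open scoped RealInnerProductSpace

noncomputable def sphereDist (x y : EuclideanSpace ℝ (Fin 3)) : ℝ :=
  Real.arccos ⟪x, y⟫

open Classical in
noncomputable def sphereInterp (x y : EuclideanSpace ℝ (Fin 3)) (t : ℝ) :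
    EuclideanSpace ℝ (Fin 3) :=
  if Real.sin (sphereDist x y) = 0 then x
  else (Real.sin ((1 - t) * sphereDist x y) / Real.sin (sphereDist x y)) • x
     + (Real.sin (t * sphereDist x y) / Real.sin (sphereDist x y)) • y

/-- A CAT(1) structure on a complete metric space `Y`: every pair of points at
distance `< π` is joined by a constant-speed minimizing geodesic
`t ↦ interp P Q t` (the point `(1-t)P + tQ`, at distance `t·d(P,Q)` from `P`),
and every geodesic triangle of perimeter `< 2π` satisfies the CAT(1)
comparison inequality with respect to any comparison triangle on the unit
sphere `S² ⊂ ℝ³` (with the angular metric). -/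
structure CAT1Space (Y : Type*) [MetricSpace Y] [CompleteSpace Y] where
  interp : Y → Y → ℝ → Y
  interp_zero : ∀ P Q : Y, dist P Q < Real.pi → interp P Q 0 = P
  interp_one : ∀ P Q : Y, dist P Q < Real.pi → interp P Q 1 = Q
  interp_dist : ∀ P Q : Y, dist P Q < Real.pi →
    ∀ s t : ℝ, s ∈ Set.Icc (0:ℝ) 1 → t ∈ Set.Icc (0:ℝ) 1 →
      dist (interp P Q s) (interp P Q t) = |s - t| * dist P Q
  comparison : ∀ P Q R : Y,
    dist P Q + dist Q R + dist R P < 2 * Real.pi →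
    ∀ p q r : EuclideanSpace ℝ (Fin 3), ‖p‖ = 1 → ‖q‖ = 1 → ‖r‖ = 1 →
      sphereDist p q = dist P Q → sphereDist q r = dist Q R →
      sphereDist r p = dist R P →
      ∀ s t : ℝ, s ∈ Set.Icc (0:ℝ) 1 → t ∈ Set.Icc (0:ℝ) 1 →
        dist (interp P Q t) (interp R Q s) ≤
          sphereDist (sphereInterp p q t) (sphereInterp r q s)

/- ### Auxiliary lemmas -/

open Real

lemma arccos_le_of_cos_le' {x w : ℝ} (hw0 : 0 ≤ w) (hwpi : w ≤ π) (hx : Real.cos w ≤ x) :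
    Real.arccos x ≤ w := by
  rcases le_or_gt 1 x with h | h
  · rw [Real.arccos_eq_zero.2 h]; exact hw0
  · have hcw : -1 ≤ Real.cos w := Real.neg_one_le_cos w
    have h1 : Real.arccos x ≤ Real.arccos (Real.cos w) := by
      apply Real.strictAntiOn_arccos.antitoneOn ⟨hcw, Real.cos_le_one w⟩
        ⟨le_trans hcw hx, le_of_lt h⟩ hx
    rwa [Real.arccos_cos hw0 hwpi] at h1

set_option maxHeartbeats 1000000 in
/-- Quantitative spherical midpoint comparison: an approximate version of the
Euclidean median formula, with fourth-order error. -/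
lemma sph_ineq' {a b c δ : ℝ} (ha : 0 ≤ a) (hb : 0 ≤ b) (hc : 0 ≤ c)
    (haδ : a ≤ δ) (hbδ : b ≤ δ) (hcδ : c ≤ δ) (hδ : δ ≤ 1/2) (htri : a ≤ b + c) :
    Real.arccos ((Real.cos b + Real.cos c) / (2 * Real.cos (a/2))) ^ 2
      ≤ (b^2 + c^2)/2 - a^2/4 + 2*δ^4 := by
  have hδ0 : 0 ≤ δ := le_trans ha haδ
  have ha2 : a^2 ≤ δ^2 := by linarith [mul_self_le_mul_self ha haδ,
    (by ring : a*a = a^2), (by ring : δ*δ = δ^2)]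
  have hb2 : b^2 ≤ δ^2 := by linarith [mul_self_le_mul_self hb hbδ,
    (by ring : b*b = b^2), (by ring : δ*δ = δ^2)]
  have hc2 : c^2 ≤ δ^2 := by linarith [mul_self_le_mul_self hc hcδ,
    (by ring : c*c = c^2), (by ring : δ*δ = δ^2)]
  have hδ2 : δ^2 ≤ 1/4 := by linarith [mul_self_le_mul_self hδ0 hδ,
    (by ring : δ*δ = δ^2)]
  obtain ⟨E, hE⟩ : ∃ E, E = (b^2+c^2)/2 - a^2/4 + 2*δ^4 := ⟨_, rfl⟩
  have hδ4 : δ^4 ≤ (1/4) * δ^2 := by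
    linarith [mul_le_mul_of_nonneg_left hδ2 (sq_nonneg δ), (by ring : δ^2*δ^2 = δ^4)]
  have hδ4nn : (0:ℝ) ≤ δ^4 := by positivity
  have hE0 : 0 ≤ E := by
    linarith [mul_self_le_mul_self ha htri, sq_nonneg (b - c), (by ring : a*a = a^2)]
  have hEδ : E ≤ (3/2) * δ^2 := by linarith [sq_nonneg a]
  have hEle : E ≤ (1:ℝ)/2 := by linarith
  obtain ⟨w, hw0, hw2⟩ : ∃ w, 0 ≤ w ∧ w^2 = E :=
    ⟨Real.sqrt E, Real.sqrt_nonneg E, Real.sq_sqrt hE0⟩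
  have hw1 : w ≤ 1 := by nlinarith [sq_nonneg (w - 1)]
  have hpi : (3:ℝ) < π := Real.pi_gt_three
  rw [← hE]
  suffices h : Real.arccos ((Real.cos b + Real.cos c) / (2 * Real.cos (a/2))) ≤ w by
    have h0 := Real.arccos_nonneg ((Real.cos b + Real.cos c) / (2 * Real.cos (a/2)))
    nlinarith [mul_self_le_mul_self h0 h]
  apply arccos_le_of_cos_le' hw0 (by linarith)
  have hca : 0 < Real.cos (a/2) := by
    apply Real.cos_pos_of_mem_Ioo
    exact Set.mem_Ioo.2 ⟨by linarith, by linarith⟩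
  rw [le_div_iff₀ (by positivity)]
  have hbb := abs_le.1 (Real.cos_bound (show |b| ≤ 1 by rw [abs_of_nonneg hb]; linarith))
  have hcb := abs_le.1 (Real.cos_bound (show |c| ≤ 1 by rw [abs_of_nonneg hc]; linarith))
  have hab := abs_le.1 (Real.cos_bound
    (show |a/2| ≤ 1 by rw [abs_of_nonneg (by linarith : (0:ℝ) ≤ a/2)]; linarith))
  have hwb := abs_le.1 (Real.cos_bound (show |w| ≤ 1 by rw [abs_of_nonneg hw0]; linarith))
  rw [abs_of_nonneg hb] at hbb
  rw [abs_of_nonneg hc] at hcb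
  rw [abs_of_nonneg (by linarith : (0:ℝ) ≤ a/2)] at hab
  rw [abs_of_nonneg hw0] at hwb
  have hbb' : 1 - b^2/2 - b^4*(5/96) ≤ Real.cos b := by linarith [hbb.1]
  have hcb' : 1 - c^2/2 - c^4*(5/96) ≤ Real.cos c := by linarith [hcb.1]
  have hab' : Real.cos (a/2) ≤ 1 - a^2/8 + a^4*(5/1536) := by linarith [hab.2]
  have hwb' : Real.cos w ≤ 1 - E/2 + E^2*(5/96) := by
    have h2 : w^4 = E^2 := by rw [← hw2]; ring
    linarith [hwb.2]
  have hW0 : 0 ≤ Real.cos w := by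
    apply Real.cos_nonneg_of_mem_Icc
    exact Set.mem_Icc.2 ⟨by linarith, by linarith⟩
  have hUA0 : (0:ℝ) ≤ 1 - a^2/8 + a^4*(5/1536) := by linarith [sq_nonneg (a^2)]
  have hstep0 : Real.cos (a/2) * Real.cos w ≤
      (1 - a^2/8 + a^4*(5/1536)) * (1 - E/2 + E^2*(5/96)) :=
    mul_le_mul hab' hwb' hW0 hUA0
  have expand : 2 * ((1 - a^2/8 + a^4*(5/1536)) * (1 - E/2 + E^2*(5/96)))
      = 2 - E - a^2/4 + (a^2*E)/8 + a^4*(5/768) + E^2*(5/48)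
        + (a^4*E^2)*(25/73728) - (a^2*E^2)*(5/384) - (a^4*E)*(5/1536) := by ring
  have ha4 : a^4 ≤ δ^4 := by
    linarith [mul_self_le_mul_self (sq_nonneg a) ha2,
      (by ring : a^2*a^2 = a^4), (by ring : δ^2*δ^2 = δ^4)]
  have hb4 : b^4 ≤ δ^4 := by
    linarith [mul_self_le_mul_self (sq_nonneg b) hb2,
      (by ring : b^2*b^2 = b^4), (by ring : δ^2*δ^2 = δ^4)]
  have hc4 : c^4 ≤ δ^4 := by
    linarith [mul_self_le_mul_self (sq_nonneg c) hc2,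
      (by ring : c^2*c^2 = c^4), (by ring : δ^2*δ^2 = δ^4)]
  have hE2 : E^2 ≤ (9/4) * δ^4 := by
    linarith [mul_self_le_mul_self hE0 hEδ, (by ring : E*E = E^2),
      (by ring : (3/2*δ^2)*(3/2*δ^2) = (9/4)*δ^4)]
  have haE : a^2*E ≤ (3/2) * δ^4 := by
    linarith [mul_le_mul ha2 hEδ hE0 (sq_nonneg δ), (by ring : δ^2*(3/2*δ^2) = (3/2)*δ^4)]
  have hδ4' : δ^4 ≤ 1/16 := by linarith
  have ha4E2 : a^4*E^2 ≤ δ^4 := by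
    have h1 : a^4*E^2 ≤ δ^4 * ((9/4)*δ^4) :=
      mul_le_mul ha4 hE2 (sq_nonneg E) hδ4nn
    have h2 : δ^4 * δ^4 ≤ δ^4 * (1/16) := mul_le_mul_of_nonneg_left hδ4' hδ4nn
    linarith [(by ring : δ^4*((9/4)*δ^4) = (9/4)*(δ^4*δ^4))]
  have hjnn1 : (0:ℝ) ≤ a^2*E^2 := by positivity
  have hjnn2 : 0 ≤ a^4*E := mul_nonneg (by positivity) hE0
  linarith [hstep0, expand]

noncomputable def v3 (x y z : ℝ) : EuclideanSpace ℝ (Fin 3) := WithLp.toLp 2 ![x, y, z]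

lemma inner_v3 (x y z x' y' z' : ℝ) : ⟪v3 x y z, v3 x' y' z'⟫ = x*x' + y*y' + z*z' := by
  simp [v3, PiLp.inner_apply, Fin.sum_univ_three, RCLike.inner_apply]
  ring

lemma norm_v3 (x y z : ℝ) (h : x^2 + y^2 + z^2 = 1) : ‖v3 x y z‖ = 1 := by
  have h2 : ⟪v3 x y z, v3 x y z⟫ = 1 := by rw [inner_v3]; nlinarith
  have := real_inner_self_eq_norm_mul_norm (v3 x y z)
  nlinarith [norm_nonneg (v3 x y z)]

lemma sphereDist_comm (x y : EuclideanSpace ℝ (Fin 3)) : sphereDist x y = sphereDist y x := by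
  unfold sphereDist; rw [real_inner_comm]

lemma sphereInterp_zero (x y : EuclideanSpace ℝ (Fin 3)) : sphereInterp x y 0 = x := by
  unfold sphereInterp
  split_ifs with h
  · rfl
  · rw [show (1 - (0:ℝ)) * sphereDist x y = sphereDist x y by ring, div_self h]
    simp

lemma cos_sphereDist {x y : EuclideanSpace ℝ (Fin 3)} (hx : ‖x‖ = 1) (hy : ‖y‖ = 1) :
    Real.cos (sphereDist x y) = ⟪x, y⟫ := by
  have h := abs_real_inner_le_norm x y
  rw [hx, hy, mul_one, abs_le] at h
  exact Real.cos_arccos h.1 h.2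

lemma sphereDist_nonneg (x y : EuclideanSpace ℝ (Fin 3)) : 0 ≤ sphereDist x y :=
  Real.arccos_nonneg _

/-- Spherical midpoint formula. -/
lemma sphereDist_interp_half {s q : EuclideanSpace ℝ (Fin 3)} (p : EuclideanSpace ℝ (Fin 3))
    (hp : ‖p‖ = 1) (hs : ‖s‖ = 1) (hq : ‖q‖ = 1) (hsmall : sphereDist s q ≤ 1) :
    sphereDist p (sphereInterp s q (1/2)) =
      Real.arccos ((Real.cos (sphereDist p s) + Real.cos (sphereDist p q)) /
        (2 * Real.cos (sphereDist s q / 2))) := by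
  have hpi : (3:ℝ) < π := Real.pi_gt_three
  set a := sphereDist s q with ha
  have ha0 : 0 ≤ a := sphereDist_nonneg s q
  rw [cos_sphereDist hp hs, cos_sphereDist hp hq]
  unfold sphereInterp
  rw [← ha]
  split_ifs with h
  · have ha' : a = 0 := by
      rw [← Real.sin_eq_zero_iff_of_lt_of_lt (by linarith) (by linarith)]
      exact h
    have hinner : ⟪s, q⟫ = 1 := by
      have h1 : (1:ℝ) ≤ ⟪s, q⟫ := Real.arccos_eq_zero.1 ha'
      have h2 := abs_real_inner_le_norm s q
      rw [hs, hq, mul_one, abs_le] at h2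
      linarith [h2.2]
    have hsq : s = q := (inner_eq_one_iff_of_norm_eq_one hs hq).1 hinner
    rw [ha', hsq]
    rw [show (0:ℝ)/2 = 0 by norm_num, Real.cos_zero]
    unfold sphereDist
    congr 1
    ring
  · have hsin2 : Real.sin a = 2 * Real.sin (a/2) * Real.cos (a/2) := by
      rw [← Real.sin_two_mul]
      congr 1
      ring
    have hs2 : Real.sin (a/2) ≠ 0 := by
      intro h0; apply h; rw [hsin2, h0]; ring
    have hc2 : Real.cos (a/2) ≠ 0 := by
      intro h0; apply h; rw [hsin2, h0]; ring
    have h12 : (1 - 1/2 : ℝ) * a = a/2 := by ring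
    have h12' : (1/2 : ℝ) * a = a/2 := by ring
    rw [h12, h12']
    have hcoef : Real.sin (a/2) / Real.sin a = 1 / (2 * Real.cos (a/2)) := by
      rw [hsin2]; field_simp
    unfold sphereDist
    rw [inner_add_right, real_inner_smul_right, real_inner_smul_right, hcoef]
    congr 1
    field_simp

open Classical in
/-- Existence of a spherical comparison triangle for small side lengths. -/
lemma exists_comparison {c α β : ℝ} (hc : 0 ≤ c) (hα : 0 ≤ α) (hβ : 0 ≤ β)
    (hc1 : c ≤ 1) (hα1 : α ≤ 1) (hβ1 : β ≤ 1)
    (t1 : α ≤ β + c) (t2 : β ≤ α + c) (t3 : c ≤ α + β) :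
    ∃ p q r : EuclideanSpace ℝ (Fin 3), ‖p‖ = 1 ∧ ‖q‖ = 1 ∧ ‖r‖ = 1 ∧
      sphereDist p q = c ∧ sphereDist q r = α ∧ sphereDist r p = β := by
  have hpi : (3:ℝ) < π := Real.pi_gt_three
  set t : ℝ := if c = 0 ∨ β = 0 then 0
    else (Real.cos α - Real.cos c * Real.cos β) / (Real.sin c * Real.sin β) with hT
  have ht1 : t^2 ≤ 1 := by
    rw [hT]
    split_ifs with hd
    · norm_num
    · push_neg at hd
      have hc0 : 0 < c := lt_of_le_of_ne hc (Ne.symm hd.1)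
      have hβ0 : 0 < β := lt_of_le_of_ne hβ (Ne.symm hd.2)
      have hsc : 0 < Real.sin c := Real.sin_pos_of_pos_of_lt_pi hc0 (by linarith)
      have hsβ : 0 < Real.sin β := Real.sin_pos_of_pos_of_lt_pi hβ0 (by linarith)
      have hup : Real.cos α ≤ Real.cos c * Real.cos β + Real.sin c * Real.sin β := by
        rw [← Real.cos_sub]
        rcases le_total β c with hle | hle
        · exact Real.cos_le_cos_of_nonneg_of_le_pi (by linarith) (by linarith) (by linarith)
        · rw [show c - β = -(β - c) by ring, Real.cos_neg]
          exact Real.cos_le_cos_of_nonneg_of_le_pi (by linarith) (by linarith) (by linarith)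
      have hlo : Real.cos c * Real.cos β - Real.sin c * Real.sin β ≤ Real.cos α := by
        rw [← Real.cos_add]
        exact Real.cos_le_cos_of_nonneg_of_le_pi (by linarith) (by linarith) (by linarith)
      rw [div_pow, div_le_one (by positivity)]
      nlinarith [mul_pos hsc hsβ]
  have hs1t : 0 ≤ 1 - t^2 := by linarith
  refine ⟨v3 1 0 0, v3 (Real.cos c) (Real.sin c) 0,
    v3 (Real.cos β) (Real.sin β * t) (Real.sin β * Real.sqrt (1 - t^2)), ?_, ?_, ?_, ?_, ?_, ?_⟩
  · exact norm_v3 _ _ _ (by norm_num)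
  · exact norm_v3 _ _ _ (by nlinarith [Real.sin_sq_add_cos_sq c])
  · apply norm_v3
    have hsq : (Real.sqrt (1 - t^2))^2 = 1 - t^2 := Real.sq_sqrt hs1t
    nlinarith [Real.sin_sq_add_cos_sq β]
  · unfold sphereDist
    rw [inner_v3]
    rw [show (1:ℝ) * Real.cos c + 0 * Real.sin c + 0 * 0 = Real.cos c by ring]
    exact Real.arccos_cos hc (by linarith)
  · unfold sphereDist
    rw [inner_v3]
    have hkey : Real.cos c * Real.cos β + Real.sin c * (Real.sin β * t)
        + 0 * (Real.sin β * Real.sqrt (1 - t^2)) = Real.cos α := by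
      rw [hT]
      split_ifs with hd
      · rcases hd with h0 | h0
        · have hαβ : α = β := le_antisymm (by linarith) (by linarith)
          rw [h0, hαβ]; simp
        · have hαc : α = c := le_antisymm (by linarith) (by linarith)
          rw [h0, hαc]; simp
      · push_neg at hd
        have hc0 : 0 < c := lt_of_le_of_ne hc (Ne.symm hd.1)
        have hβ0 : 0 < β := lt_of_le_of_ne hβ (Ne.symm hd.2)
        have hsc : 0 < Real.sin c := Real.sin_pos_of_pos_of_lt_pi hc0 (by linarith)
        have hsβ : 0 < Real.sin β := Real.sin_pos_of_pos_of_lt_pi hβ0 (by linarith)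
        field_simp
        ring
    rw [hkey]
    exact Real.arccos_cos hα (by linarith)
  · unfold sphereDist
    rw [inner_v3]
    rw [show Real.cos β * 1 + Real.sin β * t * 0 + Real.sin β * Real.sqrt (1 - t^2) * 0
        = Real.cos β by ring]
    exact Real.arccos_cos hβ (by linarith)

set_option maxHeartbeats 1000000 in
/-- The CAT(1) quadrilateral comparison estimate. -/
theorem statement3 :
    ∀ ε₀ : ℝ, 0 < ε₀ → ∃ δ₀ : ℝ, 0 < δ₀ ∧
      ∀ (Y : Type) [MetricSpace Y] [CompleteSpace Y] (_ : CAT1Space Y)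
        (P Q R S : Y),
        max (max (dist P Q) (dist Q R)) (max (dist R S) (dist P S)) ≤ δ₀ →
        dist P R ^ 2 + dist Q S ^ 2 ≤
          dist P Q ^ 2 + dist Q R ^ 2 + dist R S ^ 2 + dist P S ^ 2 +
            ε₀ * δ₀ ^ 2 := by
  intro ε₀ hε₀
  refine ⟨min (1/4) (Real.sqrt ε₀ / 12), lt_min (by norm_num)
    (by positivity), ?_⟩
  set δ₀ := min (1/4) (Real.sqrt ε₀ / 12) with hδ₀def
  intro Y _ _ cat P Q R S hmax
  have hδ₀pos : 0 < δ₀ := lt_min (by norm_num) (by positivity)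
  have hδ₀4 : δ₀ ≤ 1/4 := min_le_left _ _
  have hδ₀ε : δ₀ ≤ Real.sqrt ε₀ / 12 := min_le_right _ _
  have hpi : (3:ℝ) < π := Real.pi_gt_three
  -- side bounds
  have hPQ : dist P Q ≤ δ₀ := le_trans (le_trans (le_max_left _ _) (le_max_left _ _)) hmax
  have hQR : dist Q R ≤ δ₀ := le_trans (le_trans (le_max_right _ _) (le_max_left _ _)) hmax
  have hRS : dist R S ≤ δ₀ := le_trans (le_trans (le_max_left _ _) (le_max_right _ _)) hmax
  have hPS : dist P S ≤ δ₀ := le_trans (le_trans (le_max_right _ _) (le_max_right _ _)) hmax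
  have hQS : dist Q S ≤ 2*δ₀ := by
    have := dist_triangle Q R S; linarith
  -- midpoint of geodesic from S to Q
  set m := cat.interp S Q (1/2) with hm
  have hhalf : (1/2 : ℝ) ∈ Set.Icc (0:ℝ) 1 := by constructor <;> norm_num
  have hzero : (0 : ℝ) ∈ Set.Icc (0:ℝ) 1 := by constructor <;> norm_num
  -- First triangle: (P, Q, S)
  have key : ∀ X : Y, dist X Q ≤ δ₀ → dist X S ≤ δ₀ →
      dist X m ^ 2 ≤ (dist S X ^2 + dist X Q ^2)/2 - dist Q S ^2/4 + 2*(2*δ₀)^4 := by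
    intro X hXQ hXS
    obtain ⟨p, q, sb, hpn, hqn, hsn, e1, e2, e3⟩ :=
      exists_comparison (c := dist X Q) (α := dist Q S) (β := dist S X)
        dist_nonneg dist_nonneg dist_nonneg
        (by linarith) (by linarith) (by have := dist_comm S X; linarith)
        (by have h := dist_triangle Q X S; have e1 := dist_comm Q X;
            have e2 := dist_comm S X; linarith)
        (by have h := dist_triangle S Q X; have e1 := dist_comm S Q;
            have e2 := dist_comm Q X; linarith)
        (by have h := dist_triangle X S Q; have e1 := dist_comm S Q;
            have e2 := dist_comm X S; linarith)
    have hperim : dist X Q + dist Q S + dist S X < 2 * π := by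
      have := dist_comm S X; linarith
    have hcomp := cat.comparison X Q S hperim p q sb hpn hqn hsn e1 e2 e3 (1/2) 0 hhalf hzero
    rw [cat.interp_zero X Q (by linarith), sphereInterp_zero] at hcomp
    have hsbq : sphereDist sb q ≤ 1 := by
      rw [sphereDist_comm, e2]; linarith
    have hmid := sphereDist_interp_half p hpn hsn hqn hsbq
    rw [sphereDist_comm sb q, e2] at hmid
    rw [sphereDist_comm p sb, e3, e1] at hmid
    rw [hmid] at hcomp
    have harc := sph_ineq' (a := dist Q S) (b := dist S X) (c := dist X Q) (δ := 2*δ₀)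
      dist_nonneg dist_nonneg dist_nonneg
      hQS (by have := dist_comm S X; linarith) (by linarith) (by linarith)
      (by have h := dist_triangle Q X S; have e1 := dist_comm Q X;
          have e2 := dist_comm S X; linarith)
    have hd0 : 0 ≤ dist X m := dist_nonneg
    have hsq := pow_le_pow_left₀ hd0 hcomp 2
    linarith
  have h1 := key P hPQ hPS
  have h2 := key R (by have := dist_comm R Q; linarith) hRS
  have htri : dist P R ≤ dist P m + dist R m := by
    have := dist_triangle P m R; rw [dist_comm m R] at this; linarith
  have hPR2 : dist P R ^2 ≤ 2 * dist P m ^2 + 2 * dist R m ^2 := by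
    nlinarith [dist_nonneg (x := P) (y := R), dist_nonneg (x := P) (y := m),
      dist_nonneg (x := R) (y := m), sq_nonneg (dist P m - dist R m)]
  -- error term
  have hε₀' : 0 ≤ ε₀ := le_of_lt hε₀
  have hδ₀sq : δ₀^2 ≤ ε₀ / 144 := by
    have h3 : δ₀ * δ₀ ≤ (Real.sqrt ε₀ / 12) * (Real.sqrt ε₀ / 12) :=
      mul_self_le_mul_self (le_of_lt hδ₀pos) hδ₀ε
    have h4 : Real.sqrt ε₀ * Real.sqrt ε₀ = ε₀ := Real.mul_self_sqrt hε₀'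
    nlinarith
  have herr : 128 * δ₀^4 ≤ ε₀ * δ₀^2 := by
    have h5 : 0 ≤ δ₀^2 := sq_nonneg δ₀
    nlinarith [mul_le_mul_of_nonneg_right hδ₀sq h5]
  have hcm1 : dist S P = dist P S := dist_comm S P
  have hcm2 : dist S R = dist R S := dist_comm S R
  have hcm3 : dist R Q = dist Q R := dist_comm R Q
  nlinarith [h1, h2, hPR2]
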